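/- The three Hamiltonians H̃₁ = −(1/q₂)p₁p₂ − (q₁/q₂)p₁p₃ − (q₁/q₂)p₂² − (q₁²/q₂)p₂p₃ + ½(q₃/q₂ − q₁)p₃² − q₁² + q₁q₃/q₂ + q₂, H̃₂ = −(q₁/q₂)p₁p₂ + (1 − q₁²/q₂)p₁p₃ + (½ − q₁²/q₂)p₂² + (q₁ − q₁³/q₂)p₂p₃ + ½(q₁q₃/q₂ + q₂ − q₁²)p₃² + q₁²q₃/q₂ − q₁q₂ + q₃, and H̃₃ = ½p₁² + (q₁ − q₃/q₂)p₁p₂ + (q₂ − q₁q₃/q₂)p₁p₃ + (½q₁² − q₁q₃/q₂)p₂² + (q₁q₂ − q₃ − q₁²q₃/q₂)p₂p₃ + (½q₂² + ½q₃²/q₂ − q₁q₃)p₃² + q₁q₃²/q₂ pairwise Poisson-commute with respect to the canonical Poisson bracket on the region q₂ ≠ 0 of ℝ⁶. -/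

import Mathlib

open scoped BigOperators

/-- The canonical Poisson bracket on `ℝ⁶` with coordinates
`(q₁,q₂,q₃,p₁,p₂,p₃)`: `{F,G} = ∑ i (∂F/∂q_i ∂G/∂p_i − ∂F/∂p_i ∂G/∂q_i)`. -/
noncomputable def poissonBracket3 (F G : (Fin 3 → ℝ) × (Fin 3 → ℝ) → ℝ)
    (ξ : (Fin 3 → ℝ) × (Fin 3 → ℝ)) : ℝ :=
  ∑ i : Fin 3,
    (fderiv ℝ F ξ (Pi.single i 1, 0) * fderiv ℝ G ξ (0, Pi.single i 1)
      - fderiv ℝ F ξ (0, Pi.single i 1) * fderiv ℝ G ξ (Pi.single i 1, 0))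

/-- `H̃₁` of the transformed separation curve `λ⁵+H̃₁λ³+H̃₂λ²+H̃₃ = ½μ²`. -/
noncomputable def tH1 (ξ : (Fin 3 → ℝ) × (Fin 3 → ℝ)) : ℝ :=
  -(1/ξ.1 1) * ξ.2 0 * ξ.2 1 - (ξ.1 0/ξ.1 1) * ξ.2 0 * ξ.2 2
    - (ξ.1 0/ξ.1 1) * (ξ.2 1)^2 - ((ξ.1 0)^2/ξ.1 1) * ξ.2 1 * ξ.2 2
    + (1/2) * (ξ.1 2/ξ.1 1 - ξ.1 0) * (ξ.2 2)^2
    - (ξ.1 0)^2 + ξ.1 0 * ξ.1 2/ξ.1 1 + ξ.1 1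

/-- `H̃₂` of the transformed separation curve. -/
noncomputable def tH2 (ξ : (Fin 3 → ℝ) × (Fin 3 → ℝ)) : ℝ :=
  -(ξ.1 0/ξ.1 1) * ξ.2 0 * ξ.2 1 + (1 - (ξ.1 0)^2/ξ.1 1) * ξ.2 0 * ξ.2 2
    + (1/2 - (ξ.1 0)^2/ξ.1 1) * (ξ.2 1)^2
    + (ξ.1 0 - (ξ.1 0)^3/ξ.1 1) * ξ.2 1 * ξ.2 2
    + (1/2) * (ξ.1 0 * ξ.1 2/ξ.1 1 + ξ.1 1 - (ξ.1 0)^2) * (ξ.2 2)^2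
    + (ξ.1 0)^2 * ξ.1 2/ξ.1 1 - ξ.1 0 * ξ.1 1 + ξ.1 2

/-- `H̃₃` of the transformed separation curve. -/
noncomputable def tH3 (ξ : (Fin 3 → ℝ) × (Fin 3 → ℝ)) : ℝ :=
  (1/2) * (ξ.2 0)^2 + (ξ.1 0 - ξ.1 2/ξ.1 1) * ξ.2 0 * ξ.2 1
    + (ξ.1 1 - ξ.1 0 * ξ.1 2/ξ.1 1) * ξ.2 0 * ξ.2 2
    + ((1/2) * (ξ.1 0)^2 - ξ.1 0 * ξ.1 2/ξ.1 1) * (ξ.2 1)^2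
    + (ξ.1 0 * ξ.1 1 - ξ.1 2 - (ξ.1 0)^2 * ξ.1 2/ξ.1 1) * ξ.2 1 * ξ.2 2
    + ((1/2) * (ξ.1 1)^2 + (1/2) * (ξ.1 2)^2/ξ.1 1 - ξ.1 0 * ξ.1 2) * (ξ.2 2)^2
    + ξ.1 0 * (ξ.1 2)^2/ξ.1 1

section Aux

open ContinuousLinearMap

/-- Projection onto the `i`-th position coordinate, as a continuous linear map. -/
noncomputable def auxQL (i : Fin 3) : ((Fin 3 → ℝ) × (Fin 3 → ℝ)) →L[ℝ] ℝ :=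
  (proj i).comp (fst ℝ (Fin 3 → ℝ) (Fin 3 → ℝ))

/-- Projection onto the `i`-th momentum coordinate, as a continuous linear map. -/
noncomputable def auxPL (i : Fin 3) : ((Fin 3 → ℝ) × (Fin 3 → ℝ)) →L[ℝ] ℝ :=
  (proj i).comp (snd ℝ (Fin 3 → ℝ) (Fin 3 → ℝ))

lemma aux_hQ (i : Fin 3) (ξ : (Fin 3 → ℝ) × (Fin 3 → ℝ)) :
    HasFDerivAt (fun ξ : (Fin 3 → ℝ) × (Fin 3 → ℝ) => ξ.1 i) (auxQL i) ξ :=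
  (auxQL i).hasFDerivAt

lemma aux_hP (i : Fin 3) (ξ : (Fin 3 → ℝ) × (Fin 3 → ℝ)) :
    HasFDerivAt (fun ξ : (Fin 3 → ℝ) × (Fin 3 → ℝ) => ξ.2 i) (auxPL i) ξ :=
  (auxPL i).hasFDerivAt

lemma aux_hdiv {E : Type*} [NormedAddCommGroup E] [NormedSpace ℝ E]
    {f g : E → ℝ} {f' g' : E →L[ℝ] ℝ} {x : E} (hf : HasFDerivAt f f' x)
    (hg : HasFDerivAt g g' x) (h : g x ≠ 0) :
    HasFDerivAt (fun y => f y / g y) ((g x)⁻¹ • f' - (f x / g x ^ 2) • g') x := by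
  have h1 : HasFDerivAt (fun y => (g y)⁻¹)
      ((-(mulLeftRight ℝ ℝ (g x)⁻¹ (g x)⁻¹)).comp g') x := (hasFDerivAt_inv' h).comp x hg
  have h2 := hf.mul h1
  have h3 : (f x • (-(mulLeftRight ℝ ℝ (g x)⁻¹ (g x)⁻¹)).comp g' + (g x)⁻¹ • f')
      = ((g x)⁻¹ • f' - (f x / g x ^ 2) • g') := by
    ext v
    simp [mul_comm]
    field_simp
    ring
  rw [h3] at h2
  have h4 : HasFDerivAt (fun y => f y * (g y)⁻¹) ((g x)⁻¹ • f' - (f x / g x ^ 2) • g') x := h2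
  simpa [div_eq_mul_inv] using h4

lemma aux_hpow {E : Type*} [NormedAddCommGroup E] [NormedSpace ℝ E]
    {f : E → ℝ} {f' : E →L[ℝ] ℝ} {x : E} (hf : HasFDerivAt f f' x) (n : ℕ) :
    HasFDerivAt (fun y => f y ^ n) (((n : ℝ) * f x ^ (n - 1)) • f') x :=
  (hasDerivAt_pow n (f x)).comp_hasFDerivAt x hf

end Aux

set_option maxHeartbeats 4000000 in
/-- the Stäckel-transformed Hamiltonians of the separation curve
`λ⁵ + H̃₁λ³ + H̃₂λ² + H̃₃ = ½μ²` in Viète coordinates pairwise Poisson-commute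
on the region `q₂ ≠ 0` of ℝ⁶. -/
theorem transformed_hamiltonians_commute :
    ∀ ξ : (Fin 3 → ℝ) × (Fin 3 → ℝ), ξ.1 1 ≠ 0 →
      poissonBracket3 tH1 tH2 ξ = 0 ∧
      poissonBracket3 tH1 tH3 ξ = 0 ∧
      poissonBracket3 tH2 tH3 ξ = 0 := by
  intro ξ h
  have C : ∀ c : ℝ, HasFDerivAt (fun _ : (Fin 3 → ℝ) × (Fin 3 → ℝ) => c) (0 : ((Fin 3 → ℝ) × (Fin 3 → ℝ)) →L[ℝ] ℝ) ξ :=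
    fun c => hasFDerivAt_const c ξ
  have q0 := aux_hQ 0 ξ; have q1 := aux_hQ 1 ξ; have q2 := aux_hQ 2 ξ
  have p0 := aux_hP 0 ξ; have p1 := aux_hP 1 ξ; have p2 := aux_hP 2 ξ
  -- tH1
  have a1 := ((aux_hdiv (C 1) q1 h).neg.mul p0).mul p1
  have a2 := ((aux_hdiv q0 q1 h).mul p0).mul p2
  have a3 := (aux_hdiv q0 q1 h).mul (aux_hpow p1 2)
  have a4 := ((aux_hdiv (aux_hpow q0 2) q1 h).mul p1).mul p2
  have a5 := ((C (1/2)).mul ((aux_hdiv q2 q1 h).sub q0)).mul (aux_hpow p2 2)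
  have a6 := aux_hpow q0 2
  have a7 := aux_hdiv (q0.mul q2) q1 h
  have d1 : HasFDerivAt tH1 _ ξ := ((((((a1.sub a2).sub a3).sub a4).add a5).sub a6).add a7).add q1
  -- tH2
  have b1 := ((aux_hdiv q0 q1 h).neg.mul p0).mul p1
  have b2 := (((C 1).sub (aux_hdiv (aux_hpow q0 2) q1 h)).mul p0).mul p2
  have b3 := ((C (1/2)).sub (aux_hdiv (aux_hpow q0 2) q1 h)).mul (aux_hpow p1 2)
  have b4 := ((q0.sub (aux_hdiv (aux_hpow q0 3) q1 h)).mul p1).mul p2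
  have b5 := ((C (1/2)).mul (((aux_hdiv (q0.mul q2) q1 h).add q1).sub (aux_hpow q0 2))).mul
    (aux_hpow p2 2)
  have b6 := aux_hdiv ((aux_hpow q0 2).mul q2) q1 h
  have b7 := q0.mul q1
  have d2 : HasFDerivAt tH2 _ ξ := ((((((b1.add b2).add b3).add b4).add b5).add b6).sub b7).add q2
  -- tH3
  have c1 := (C (1/2)).mul (aux_hpow p0 2)
  have c2 := ((q0.sub (aux_hdiv q2 q1 h)).mul p0).mul p1
  have c3 := ((q1.sub (aux_hdiv (q0.mul q2) q1 h)).mul p0).mul p2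
  have c4 := (((C (1/2)).mul (aux_hpow q0 2)).sub (aux_hdiv (q0.mul q2) q1 h)).mul (aux_hpow p1 2)
  have c5 := ((((q0.mul q1).sub q2).sub (aux_hdiv ((aux_hpow q0 2).mul q2) q1 h)).mul p1).mul p2
  have c6 := ((((C (1/2)).mul (aux_hpow q1 2)).add
    (aux_hdiv ((C (1/2)).mul (aux_hpow q2 2)) q1 h)).sub (q0.mul q2)).mul (aux_hpow p2 2)
  have c7 := aux_hdiv (q0.mul (aux_hpow q2 2)) q1 h
  have d3 : HasFDerivAt tH3 _ ξ := (((((c1.add c2).add c3).add c4).add c5).add c6).add c7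
  have E1q0 : fderiv ℝ tH1 ξ (Pi.single 0 1, 0) = (-ξ.2 1^2 - ξ.2 0*ξ.2 2 + ξ.1 2 + (-1/2)*ξ.1 1*ξ.2 2^2 - 2*ξ.1 0*ξ.2 1*ξ.2 2 - 2*ξ.1 0*ξ.1 1)/ξ.1 1 := by
    rw [d1.fderiv]; simp only [ContinuousLinearMap.add_apply, ContinuousLinearMap.sub_apply,
      ContinuousLinearMap.smul_apply, ContinuousLinearMap.neg_apply,
      ContinuousLinearMap.zero_apply, ContinuousLinearMap.coe_comp', Function.comp_apply,
      ContinuousLinearMap.proj_apply, ContinuousLinearMap.coe_fst', ContinuousLinearMap.coe_snd',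
      auxQL, auxPL, smul_eq_mul, Pi.single_apply, Fin.reduceEq, reduceIte,
      if_true, if_false]
    norm_num
    field_simp
    ring
  have E1q1 : fderiv ℝ tH1 ξ (Pi.single 1 1, 0) = (ξ.2 0*ξ.2 1 + (-1/2)*ξ.1 2*ξ.2 2^2 + ξ.1 1^2 + ξ.1 0*ξ.2 1^2 + ξ.1 0*ξ.2 0*ξ.2 2 - ξ.1 0*ξ.1 2 + ξ.1 0^2*ξ.2 1*ξ.2 2)/(ξ.1 1)^2 := by
    rw [d1.fderiv]; simp only [ContinuousLinearMap.add_apply, ContinuousLinearMap.sub_apply,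
      ContinuousLinearMap.smul_apply, ContinuousLinearMap.neg_apply,
      ContinuousLinearMap.zero_apply, ContinuousLinearMap.coe_comp', Function.comp_apply,
      ContinuousLinearMap.proj_apply, ContinuousLinearMap.coe_fst', ContinuousLinearMap.coe_snd',
      auxQL, auxPL, smul_eq_mul, Pi.single_apply, Fin.reduceEq, reduceIte,
      if_true, if_false]
    norm_num
    field_simp
    ring
  have E1q2 : fderiv ℝ tH1 ξ (Pi.single 2 1, 0) = ((1/2)*ξ.2 2^2 + ξ.1 0)/ξ.1 1 := by
    rw [d1.fderiv]; simp only [ContinuousLinearMap.add_apply, ContinuousLinearMap.sub_apply,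
      ContinuousLinearMap.smul_apply, ContinuousLinearMap.neg_apply,
      ContinuousLinearMap.zero_apply, ContinuousLinearMap.coe_comp', Function.comp_apply,
      ContinuousLinearMap.proj_apply, ContinuousLinearMap.coe_fst', ContinuousLinearMap.coe_snd',
      auxQL, auxPL, smul_eq_mul, Pi.single_apply, Fin.reduceEq, reduceIte,
      if_true, if_false]
    norm_num
    field_simp
  have E1p0 : fderiv ℝ tH1 ξ (0, Pi.single 0 1) = (-ξ.2 1 - ξ.1 0*ξ.2 2)/ξ.1 1 := by
    rw [d1.fderiv]; simp only [ContinuousLinearMap.add_apply, ContinuousLinearMap.sub_apply,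
      ContinuousLinearMap.smul_apply, ContinuousLinearMap.neg_apply,
      ContinuousLinearMap.zero_apply, ContinuousLinearMap.coe_comp', Function.comp_apply,
      ContinuousLinearMap.proj_apply, ContinuousLinearMap.coe_fst', ContinuousLinearMap.coe_snd',
      auxQL, auxPL, smul_eq_mul, Pi.single_apply, Fin.reduceEq, reduceIte,
      if_true, if_false]
    norm_num
    field_simp
  have E1p1 : fderiv ℝ tH1 ξ (0, Pi.single 1 1) = (-ξ.2 0 - 2*ξ.1 0*ξ.2 1 - ξ.1 0^2*ξ.2 2)/ξ.1 1 := by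
    rw [d1.fderiv]; simp only [ContinuousLinearMap.add_apply, ContinuousLinearMap.sub_apply,
      ContinuousLinearMap.smul_apply, ContinuousLinearMap.neg_apply,
      ContinuousLinearMap.zero_apply, ContinuousLinearMap.coe_comp', Function.comp_apply,
      ContinuousLinearMap.proj_apply, ContinuousLinearMap.coe_fst', ContinuousLinearMap.coe_snd',
      auxQL, auxPL, smul_eq_mul, Pi.single_apply, Fin.reduceEq, reduceIte,
      if_true, if_false]
    norm_num
    field_simp
  have E1p2 : fderiv ℝ tH1 ξ (0, Pi.single 2 1) = (ξ.1 2*ξ.2 2 - ξ.1 0*ξ.2 0 - ξ.1 0*ξ.1 1*ξ.2 2 - ξ.1 0^2*ξ.2 1)/ξ.1 1 := by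
    rw [d1.fderiv]; simp only [ContinuousLinearMap.add_apply, ContinuousLinearMap.sub_apply,
      ContinuousLinearMap.smul_apply, ContinuousLinearMap.neg_apply,
      ContinuousLinearMap.zero_apply, ContinuousLinearMap.coe_comp', Function.comp_apply,
      ContinuousLinearMap.proj_apply, ContinuousLinearMap.coe_fst', ContinuousLinearMap.coe_snd',
      auxQL, auxPL, smul_eq_mul, Pi.single_apply, Fin.reduceEq, reduceIte,
      if_true, if_false]
    norm_num
    field_simp
    ring
  have E2q0 : fderiv ℝ tH2 ξ (Pi.single 0 1, 0) = (-ξ.2 0*ξ.2 1 + (1/2)*ξ.1 2*ξ.2 2^2 + ξ.1 1*ξ.2 1*ξ.2 2 - ξ.1 1^2 - 2*ξ.1 0*ξ.2 1^2 - 2*ξ.1 0*ξ.2 0*ξ.2 2 + 2*ξ.1 0*ξ.1 2 - ξ.1 0*ξ.1 1*ξ.2 2^2 - 3*ξ.1 0^2*ξ.2 1*ξ.2 2)/ξ.1 1 := by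
    rw [d2.fderiv]; simp only [ContinuousLinearMap.add_apply, ContinuousLinearMap.sub_apply,
      ContinuousLinearMap.smul_apply, ContinuousLinearMap.neg_apply,
      ContinuousLinearMap.zero_apply, ContinuousLinearMap.coe_comp', Function.comp_apply,
      ContinuousLinearMap.proj_apply, ContinuousLinearMap.coe_fst', ContinuousLinearMap.coe_snd',
      auxQL, auxPL, smul_eq_mul, Pi.single_apply, Fin.reduceEq, reduceIte,
      if_true, if_false]
    norm_num
    field_simp
    ring
  have E2q1 : fderiv ℝ tH2 ξ (Pi.single 1 1, 0) = ((1/2)*ξ.1 1^2*ξ.2 2^2 + ξ.1 0*ξ.2 0*ξ.2 1 + (-1/2)*ξ.1 0*ξ.1 2*ξ.2 2^2 - ξ.1 0*ξ.1 1^2 + ξ.1 0^2*ξ.2 1^2 + ξ.1 0^2*ξ.2 0*ξ.2 2 - ξ.1 0^2*ξ.1 2 + ξ.1 0^3*ξ.2 1*ξ.2 2)/(ξ.1 1)^2 := by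
    rw [d2.fderiv]; simp only [ContinuousLinearMap.add_apply, ContinuousLinearMap.sub_apply,
      ContinuousLinearMap.smul_apply, ContinuousLinearMap.neg_apply,
      ContinuousLinearMap.zero_apply, ContinuousLinearMap.coe_comp', Function.comp_apply,
      ContinuousLinearMap.proj_apply, ContinuousLinearMap.coe_fst', ContinuousLinearMap.coe_snd',
      auxQL, auxPL, smul_eq_mul, Pi.single_apply, Fin.reduceEq, reduceIte,
      if_true, if_false]
    norm_num
    field_simp
    ring
  have E2q2 : fderiv ℝ tH2 ξ (Pi.single 2 1, 0) = (ξ.1 1 + (1/2)*ξ.1 0*ξ.2 2^2 + ξ.1 0^2)/ξ.1 1 := by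
    rw [d2.fderiv]; simp only [ContinuousLinearMap.add_apply, ContinuousLinearMap.sub_apply,
      ContinuousLinearMap.smul_apply, ContinuousLinearMap.neg_apply,
      ContinuousLinearMap.zero_apply, ContinuousLinearMap.coe_comp', Function.comp_apply,
      ContinuousLinearMap.proj_apply, ContinuousLinearMap.coe_fst', ContinuousLinearMap.coe_snd',
      auxQL, auxPL, smul_eq_mul, Pi.single_apply, Fin.reduceEq, reduceIte,
      if_true, if_false]
    norm_num
    field_simp
    ring
  have E2p0 : fderiv ℝ tH2 ξ (0, Pi.single 0 1) = (ξ.1 1*ξ.2 2 - ξ.1 0*ξ.2 1 - ξ.1 0^2*ξ.2 2)/ξ.1 1 := by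
    rw [d2.fderiv]; simp only [ContinuousLinearMap.add_apply, ContinuousLinearMap.sub_apply,
      ContinuousLinearMap.smul_apply, ContinuousLinearMap.neg_apply,
      ContinuousLinearMap.zero_apply, ContinuousLinearMap.coe_comp', Function.comp_apply,
      ContinuousLinearMap.proj_apply, ContinuousLinearMap.coe_fst', ContinuousLinearMap.coe_snd',
      auxQL, auxPL, smul_eq_mul, Pi.single_apply, Fin.reduceEq, reduceIte,
      if_true, if_false]
    norm_num
    field_simp
    ring
  have E2p1 : fderiv ℝ tH2 ξ (0, Pi.single 1 1) = (ξ.1 1*ξ.2 1 - ξ.1 0*ξ.2 0 + ξ.1 0*ξ.1 1*ξ.2 2 - 2*ξ.1 0^2*ξ.2 1 - ξ.1 0^3*ξ.2 2)/ξ.1 1 := by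
    rw [d2.fderiv]; simp only [ContinuousLinearMap.add_apply, ContinuousLinearMap.sub_apply,
      ContinuousLinearMap.smul_apply, ContinuousLinearMap.neg_apply,
      ContinuousLinearMap.zero_apply, ContinuousLinearMap.coe_comp', Function.comp_apply,
      ContinuousLinearMap.proj_apply, ContinuousLinearMap.coe_fst', ContinuousLinearMap.coe_snd',
      auxQL, auxPL, smul_eq_mul, Pi.single_apply, Fin.reduceEq, reduceIte,
      if_true, if_false]
    norm_num
    field_simp
    ring
  have E2p2 : fderiv ℝ tH2 ξ (0, Pi.single 2 1) = (ξ.1 1*ξ.2 0 + ξ.1 1^2*ξ.2 2 + ξ.1 0*ξ.1 2*ξ.2 2 + ξ.1 0*ξ.1 1*ξ.2 1 - ξ.1 0^2*ξ.2 0 - ξ.1 0^2*ξ.1 1*ξ.2 2 - ξ.1 0^3*ξ.2 1)/ξ.1 1 := by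
    rw [d2.fderiv]; simp only [ContinuousLinearMap.add_apply, ContinuousLinearMap.sub_apply,
      ContinuousLinearMap.smul_apply, ContinuousLinearMap.neg_apply,
      ContinuousLinearMap.zero_apply, ContinuousLinearMap.coe_comp', Function.comp_apply,
      ContinuousLinearMap.proj_apply, ContinuousLinearMap.coe_fst', ContinuousLinearMap.coe_snd',
      auxQL, auxPL, smul_eq_mul, Pi.single_apply, Fin.reduceEq, reduceIte,
      if_true, if_false]
    norm_num
    field_simp
    ring
  have E3q0 : fderiv ℝ tH3 ξ (Pi.single 0 1, 0) = (-ξ.1 2*ξ.2 1^2 - ξ.1 2*ξ.2 0*ξ.2 2 + ξ.1 2^2 + ξ.1 1*ξ.2 0*ξ.2 1 - ξ.1 1*ξ.1 2*ξ.2 2^2 + ξ.1 1^2*ξ.2 1*ξ.2 2 - 2*ξ.1 0*ξ.1 2*ξ.2 1*ξ.2 2 + ξ.1 0*ξ.1 1*ξ.2 1^2)/ξ.1 1 := by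
    rw [d3.fderiv]; simp only [ContinuousLinearMap.add_apply, ContinuousLinearMap.sub_apply,
      ContinuousLinearMap.smul_apply, ContinuousLinearMap.neg_apply,
      ContinuousLinearMap.zero_apply, ContinuousLinearMap.coe_comp', Function.comp_apply,
      ContinuousLinearMap.proj_apply, ContinuousLinearMap.coe_fst', ContinuousLinearMap.coe_snd',
      auxQL, auxPL, smul_eq_mul, Pi.single_apply, Fin.reduceEq, reduceIte,
      if_true, if_false]
    norm_num
    field_simp
    ring
  have E3q1 : fderiv ℝ tH3 ξ (Pi.single 1 1, 0) = (ξ.1 2*ξ.2 0*ξ.2 1 + (-1/2)*ξ.1 2^2*ξ.2 2^2 + ξ.1 1^2*ξ.2 0*ξ.2 2 + ξ.1 1^3*ξ.2 2^2 + ξ.1 0*ξ.1 2*ξ.2 1^2 + ξ.1 0*ξ.1 2*ξ.2 0*ξ.2 2 - ξ.1 0*ξ.1 2^2 + ξ.1 0*ξ.1 1^2*ξ.2 1*ξ.2 2 + ξ.1 0^2*ξ.1 2*ξ.2 1*ξ.2 2)/(ξ.1 1)^2 := by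
    rw [d3.fderiv]; simp only [ContinuousLinearMap.add_apply, ContinuousLinearMap.sub_apply,
      ContinuousLinearMap.smul_apply, ContinuousLinearMap.neg_apply,
      ContinuousLinearMap.zero_apply, ContinuousLinearMap.coe_comp', Function.comp_apply,
      ContinuousLinearMap.proj_apply, ContinuousLinearMap.coe_fst', ContinuousLinearMap.coe_snd',
      auxQL, auxPL, smul_eq_mul, Pi.single_apply, Fin.reduceEq, reduceIte,
      if_true, if_false]
    norm_num
    field_simp
    ring
  have E3q2 : fderiv ℝ tH3 ξ (Pi.single 2 1, 0) = (-ξ.2 0*ξ.2 1 + ξ.1 2*ξ.2 2^2 - ξ.1 1*ξ.2 1*ξ.2 2 - ξ.1 0*ξ.2 1^2 - ξ.1 0*ξ.2 0*ξ.2 2 + 2*ξ.1 0*ξ.1 2 - ξ.1 0*ξ.1 1*ξ.2 2^2 - ξ.1 0^2*ξ.2 1*ξ.2 2)/ξ.1 1 := by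
    rw [d3.fderiv]; simp only [ContinuousLinearMap.add_apply, ContinuousLinearMap.sub_apply,
      ContinuousLinearMap.smul_apply, ContinuousLinearMap.neg_apply,
      ContinuousLinearMap.zero_apply, ContinuousLinearMap.coe_comp', Function.comp_apply,
      ContinuousLinearMap.proj_apply, ContinuousLinearMap.coe_fst', ContinuousLinearMap.coe_snd',
      auxQL, auxPL, smul_eq_mul, Pi.single_apply, Fin.reduceEq, reduceIte,
      if_true, if_false]
    norm_num
    field_simp
    ring
  have E3p0 : fderiv ℝ tH3 ξ (0, Pi.single 0 1) = (-ξ.1 2*ξ.2 1 + ξ.1 1*ξ.2 0 + ξ.1 1^2*ξ.2 2 - ξ.1 0*ξ.1 2*ξ.2 2 + ξ.1 0*ξ.1 1*ξ.2 1)/ξ.1 1 := by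
    rw [d3.fderiv]; simp only [ContinuousLinearMap.add_apply, ContinuousLinearMap.sub_apply,
      ContinuousLinearMap.smul_apply, ContinuousLinearMap.neg_apply,
      ContinuousLinearMap.zero_apply, ContinuousLinearMap.coe_comp', Function.comp_apply,
      ContinuousLinearMap.proj_apply, ContinuousLinearMap.coe_fst', ContinuousLinearMap.coe_snd',
      auxQL, auxPL, smul_eq_mul, Pi.single_apply, Fin.reduceEq, reduceIte,
      if_true, if_false]
    norm_num
    field_simp
    ring
  have E3p1 : fderiv ℝ tH3 ξ (0, Pi.single 1 1) = (-ξ.1 2*ξ.2 0 - ξ.1 1*ξ.1 2*ξ.2 2 - 2*ξ.1 0*ξ.1 2*ξ.2 1 + ξ.1 0*ξ.1 1*ξ.2 0 + ξ.1 0*ξ.1 1^2*ξ.2 2 - ξ.1 0^2*ξ.1 2*ξ.2 2 + ξ.1 0^2*ξ.1 1*ξ.2 1)/ξ.1 1 := by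
    rw [d3.fderiv]; simp only [ContinuousLinearMap.add_apply, ContinuousLinearMap.sub_apply,
      ContinuousLinearMap.smul_apply, ContinuousLinearMap.neg_apply,
      ContinuousLinearMap.zero_apply, ContinuousLinearMap.coe_comp', Function.comp_apply,
      ContinuousLinearMap.proj_apply, ContinuousLinearMap.coe_fst', ContinuousLinearMap.coe_snd',
      auxQL, auxPL, smul_eq_mul, Pi.single_apply, Fin.reduceEq, reduceIte,
      if_true, if_false]
    norm_num
    field_simp
    ring
  have E3p2 : fderiv ℝ tH3 ξ (0, Pi.single 2 1) = (ξ.1 2^2*ξ.2 2 - ξ.1 1*ξ.1 2*ξ.2 1 + ξ.1 1^2*ξ.2 0 + ξ.1 1^3*ξ.2 2 - ξ.1 0*ξ.1 2*ξ.2 0 - 2*ξ.1 0*ξ.1 1*ξ.1 2*ξ.2 2 + ξ.1 0*ξ.1 1^2*ξ.2 1 - ξ.1 0^2*ξ.1 2*ξ.2 1)/ξ.1 1 := by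
    rw [d3.fderiv]; simp only [ContinuousLinearMap.add_apply, ContinuousLinearMap.sub_apply,
      ContinuousLinearMap.smul_apply, ContinuousLinearMap.neg_apply,
      ContinuousLinearMap.zero_apply, ContinuousLinearMap.coe_comp', Function.comp_apply,
      ContinuousLinearMap.proj_apply, ContinuousLinearMap.coe_fst', ContinuousLinearMap.coe_snd',
      auxQL, auxPL, smul_eq_mul, Pi.single_apply, Fin.reduceEq, reduceIte,
      if_true, if_false]
    norm_num
    field_simp
    ring
  clear a1 a2 a3 a4 a5 a6 a7 b1 b2 b3 b4 b5 b6 b7 c1 c2 c3 c4 c5 c6 c7 d1 d2 d3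
  clear q0 q1 q2 p0 p1 p2 C
  refine ⟨?_, ?_, ?_⟩
  · simp only [poissonBracket3, Fin.sum_univ_three, E1q0, E1q1, E1q2, E1p0, E1p1, E1p2,
      E2q0, E2q1, E2q2, E2p0, E2p1, E2p2]
    field_simp
    ring
  · simp only [poissonBracket3, Fin.sum_univ_three, E1q0, E1q1, E1q2, E1p0, E1p1, E1p2,
      E3q0, E3q1, E3q2, E3p0, E3p1, E3p2]
    field_simp
    ring
  · simp only [poissonBracket3, Fin.sum_univ_three, E2q0, E2q1, E2q2, E2p0, E2p1, E2p2,
      E3q0, E3q1, E3q2, E3p0, E3p1, E3p2]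
    field_simp
    ring
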